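/- For the Berwald–Moór metric of momenta one has ∑_r a_r^{ir} = n·a^i for every index i, and consequently the torsion covector vanishes: C^i := ∑_r C_r^{ir} = 0 for every i. -/

import Mathlib

open Finset

noncomputable section

/-- The Berwald–Moór coefficients: `a^{i₁…i_n} = 1/n!` if the indices are pairwise
distinct and `0` otherwise, with `n = N + 4`. -/
def BMc (N : ℕ) : (Fin (N + 4) → Fin (N + 4)) → ℝ :=
  fun ι => if Function.Injective ι then ((N + 4).factorial : ℝ)⁻¹ else 0

/-- `A(p) = ∑ a^{i₁…i_n} p_{i₁}⋯p_{i_n}`. -/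
def Afun (N : ℕ) (p : Fin (N + 4) → ℝ) : ℝ :=
  ∑ ι : Fin (N + 4) → Fin (N + 4), BMc N ι * ∏ t, p (ι t)

/-- `K(p) = A(p)^{1/n}`, the Berwald–Moór metric of momenta. -/
def Kfun (N : ℕ) (p : Fin (N + 4) → ℝ) : ℝ :=
  Afun N p ^ ((1 : ℝ) / (N + 4))

/-- `a^i = (∑ a^{i i₂…i_n} p_{i₂}⋯p_{i_n}) / K^{n-1}`. -/
def aU1 (N : ℕ) (i : Fin (N + 4)) (p : Fin (N + 4) → ℝ) : ℝ :=
  (∑ ι : Fin (N + 3) → Fin (N + 4), BMc N (Fin.cons i ι) * ∏ t, p (ι t)) / Kfun N p ^ (N + 3)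

/-- `a^{ij} = (∑ a^{i j i₃…i_n} p_{i₃}⋯p_{i_n}) / K^{n-2}`. -/
def aU2 (N : ℕ) (i j : Fin (N + 4)) (p : Fin (N + 4) → ℝ) : ℝ :=
  (∑ ι : Fin (N + 2) → Fin (N + 4), BMc N (Fin.cons i (Fin.cons j ι)) * ∏ t, p (ι t)) /
    Kfun N p ^ (N + 2)

/-- `a^{ijk} = (∑ a^{i j k i₄…i_n} p_{i₄}⋯p_{i_n}) / K^{n-3}`. -/
def aU3 (N : ℕ) (i j k : Fin (N + 4)) (p : Fin (N + 4) → ℝ) : ℝ :=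
  (∑ ι : Fin (N + 1) → Fin (N + 4), BMc N (Fin.cons i (Fin.cons j (Fin.cons k ι))) *
    ∏ t, p (ι t)) / Kfun N p ^ (N + 1)

/-- The matrix `a_{ij}`: `a_{ij} = n a_i a_j` for `i ≠ j` and `a_{ii} = -n(n-2) a_i²`,
where `a_i = p_i/K`. -/
def aLowBM (N : ℕ) (p : Fin (N + 4) → ℝ) (i j : Fin (N + 4)) : ℝ :=
  if i = j then -((N + 4 : ℝ) * (N + 2)) * (p i / Kfun N p) ^ 2
  else (N + 4 : ℝ) * (p i / Kfun N p) * (p j / Kfun N p)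

/-- `g_{ij} = (1/(n-1)) a_{ij} + ((n-2)/(n-1)) a_i a_j`. -/
def gLowBM (N : ℕ) (p : Fin (N + 4) → ℝ) (i j : Fin (N + 4)) : ℝ :=
  (1 / (N + 3 : ℝ)) * aLowBM N p i j +
    ((N + 2 : ℝ) / (N + 3)) * (p i / Kfun N p) * (p j / Kfun N p)

/-- Partial derivative `∂f/∂p_k` of a function of `p`. -/
def pd {n : ℕ} (f : (Fin n → ℝ) → ℝ) (k : Fin n) (p : Fin n → ℝ) : ℝ :=
  deriv (fun t => f (Function.update p k t)) (p k)

/-- Fundamental metrical d-tensor `g^{ij} = (1/2) ∂²(K²)/∂p_i∂p_j`. -/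
def gU (N : ℕ) (i j : Fin (N + 4)) (p : Fin (N + 4) → ℝ) : ℝ :=
  (1 / 2 : ℝ) * pd (fun q => pd (fun r => Kfun N r ^ 2) j q) i p

/-- Angular metrical d-tensor `h^{ij} = K ∂²K/∂p_i∂p_j`. -/
def hU (N : ℕ) (i j : Fin (N + 4)) (p : Fin (N + 4) → ℝ) : ℝ :=
  Kfun N p * pd (fun q => pd (Kfun N) j q) i p

/-- v-torsion d-tensor `C^{ijk} = -(1/2) ∂g^{ij}/∂p_k`. -/
def CU (N : ℕ) (i j k : Fin (N + 4)) (p : Fin (N + 4) → ℝ) : ℝ :=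
  -(1 / 2 : ℝ) * pd (gU N i j) k p

/-- v-derivation components `C_i^{jk} = ∑_s g_{is} C^{sjk}`. -/
def CL (N : ℕ) (p : Fin (N + 4) → ℝ) (i j k : Fin (N + 4)) : ℝ :=
  ∑ s, gLowBM N p i s * CU N s j k p
lemma inj_avoid_sum {n : ℕ} (p : Fin n → ℝ) :
    ∀ (m : ℕ) (s : Finset (Fin n)), m + s.card = n →
    (∑ ι : Fin m → Fin n,
        if Function.Injective ι ∧ ∀ t, ι t ∉ s then ∏ t, p (ι t) else 0)
      = (m.factorial : ℝ) * ∏ j ∈ sᶜ, p j := by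
  intro m
  induction m with
  | zero =>
    intro s hs
    have hsc : sᶜ = (∅ : Finset (Fin n)) := by
      have : s = Finset.univ := Finset.eq_univ_of_card s (by simpa using hs)
      rw [this, Finset.compl_univ]
    have h1 : ∀ ι : Fin 0 → Fin n,
        (if Function.Injective ι ∧ ∀ t, ι t ∉ s then ∏ t, p (ι t) else 0) = 1 := by
      intro ι
      rw [if_pos ⟨Function.injective_of_subsingleton ι, fun t => t.elim0⟩]
      simp
    rw [Finset.sum_congr rfl (fun ι _ => h1 ι), hsc]
    simp
  | succ m ih =>
    intro s hs
    have key : (∑ ι : Fin (m+1) → Fin n,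
        if Function.Injective ι ∧ ∀ t, ι t ∉ s then ∏ t, p (ι t) else 0)
        = ∑ q : Fin n × (Fin m → Fin n),
          (if Function.Injective (Fin.cons q.1 q.2 : Fin (m+1) → Fin n) ∧
              (∀ t, (Fin.cons q.1 q.2 : Fin (m+1) → Fin n) t ∉ s)
            then ∏ t, p ((Fin.cons q.1 q.2 : Fin (m+1) → Fin n) t) else 0) :=
      (Fintype.sum_equiv (Fin.consEquiv fun _ => Fin n) _ _ (fun q => rfl)).symm
    rw [key, Fintype.sum_prod_type]
    have hrow : ∀ x : Fin n, (∑ ι : Fin m → Fin n,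
        (if Function.Injective (Fin.cons x ι : Fin (m+1) → Fin n) ∧
            (∀ t, (Fin.cons x ι : Fin (m+1) → Fin n) t ∉ s)
          then ∏ t, p ((Fin.cons x ι : Fin (m+1) → Fin n) t) else 0))
        = if x ∈ sᶜ then p x * ((m.factorial : ℝ) * ∏ j ∈ sᶜ.erase x, p j) else 0 := by
      intro x
      by_cases hx : x ∈ s
      · rw [if_neg (by simpa using hx)]
        apply Finset.sum_eq_zero
        intro ι _
        rw [if_neg]
        rintro ⟨-, h2⟩
        exact h2 0 (by simpa using hx)
      · rw [if_pos (by simpa using hx)]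
        have hins : m + (insert x s).card = n := by
          rw [Finset.card_insert_of_notMem hx]; omega
        have := ih (insert x s) hins
        rw [Finset.compl_insert] at this
        rw [← this, Finset.mul_sum]
        apply Finset.sum_congr rfl
        intro ι _
        have hcond : (Function.Injective (Fin.cons x ι : Fin (m+1) → Fin n) ∧
            (∀ t, (Fin.cons x ι : Fin (m+1) → Fin n) t ∉ s))
            ↔ (Function.Injective ι ∧ ∀ t, ι t ∉ insert x s) := by
          rw [Fin.cons_injective_iff]
          constructor
          · rintro ⟨⟨hxr, hinj⟩, hav⟩
            refine ⟨hinj, fun t => ?_⟩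
            simp only [Finset.mem_insert]
            rintro (h | h)
            · exact hxr ⟨t, h⟩
            · exact hav t.succ (by simpa using h)
          · rintro ⟨hinj, hav⟩
            refine ⟨⟨fun hmem => ?_, hinj⟩, fun t => ?_⟩
            · obtain ⟨t, ht⟩ := hmem
              exact hav t (by rw [ht]; exact Finset.mem_insert_self x s)
            refine Fin.cases ?_ ?_ t
            · simpa using hx
            · intro t'; simpa using fun h => hav t' (Finset.mem_insert_of_mem h)
        rw [if_congr hcond rfl rfl]
        split_ifs with h
        · rw [Fin.prod_univ_succ]
          simp
        · ring
    rw [Finset.sum_congr rfl (fun x _ => hrow x)]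
    rw [Finset.sum_ite_mem, Finset.univ_inter]
    have hterm : ∀ x ∈ sᶜ, p x * ((m.factorial : ℝ) * ∏ j ∈ sᶜ.erase x, p j)
        = (m.factorial : ℝ) * ∏ j ∈ sᶜ, p j := by
      intro x hx
      rw [mul_left_comm, Finset.mul_prod_erase _ _ hx]
    rw [Finset.sum_congr rfl hterm, Finset.sum_const]
    have hcard : sᶜ.card = m + 1 := by
      rw [Finset.card_compl, Fintype.card_fin]; omega
    rw [hcard, nsmul_eq_mul, Nat.factorial_succ]
    push_cast
    ring
lemma Afun_eq (N : ℕ) (p : Fin (N + 4) → ℝ) : Afun N p = ∏ i, p i := by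
  unfold Afun BMc
  have h : ∀ ι : Fin (N+4) → Fin (N+4),
      (if Function.Injective ι then (((N+4).factorial : ℝ))⁻¹ else 0) * ∏ t, p (ι t)
      = ((N+4).factorial : ℝ)⁻¹ *
        (if Function.Injective ι ∧ ∀ t, ι t ∉ (∅ : Finset (Fin (N+4))) then ∏ t, p (ι t) else 0) := by
    intro ι
    by_cases h1 : Function.Injective ι
    · rw [if_pos h1, if_pos ⟨h1, fun t => Finset.notMem_empty _⟩]
    · rw [if_neg h1, if_neg (fun hc => h1 hc.1)]; ring
  rw [Finset.sum_congr rfl (fun ι _ => h ι), ← Finset.mul_sum,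
    inj_avoid_sum p (N+4) ∅ (by simp), Finset.compl_empty]
  rw [← mul_assoc, inv_mul_cancel₀ (by positivity), one_mul]

lemma aU1_num (N : ℕ) (i : Fin (N + 4)) (p : Fin (N + 4) → ℝ) :
    (∑ ι : Fin (N + 3) → Fin (N + 4), BMc N (Fin.cons i ι) * ∏ t, p (ι t))
      = ((N+4).factorial : ℝ)⁻¹ * (((N+3).factorial : ℝ) * ∏ j ∈ ({i} : Finset (Fin (N+4)))ᶜ, p j) := by
  unfold BMc
  have h : ∀ ι : Fin (N+3) → Fin (N+4),
      (if Function.Injective (Fin.cons i ι : Fin (N+4) → Fin (N+4)) then (((N+4).factorial : ℝ))⁻¹ else 0) * ∏ t, p (ι t)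
      = ((N+4).factorial : ℝ)⁻¹ *
        (if Function.Injective ι ∧ ∀ t, ι t ∉ ({i} : Finset (Fin (N+4))) then ∏ t, p (ι t) else 0) := by
    intro ι
    have hiff : Function.Injective (Fin.cons i ι : Fin (N+4) → Fin (N+4))
        ↔ (Function.Injective ι ∧ ∀ t, ι t ∉ ({i} : Finset (Fin (N+4)))) := by
      rw [Fin.cons_injective_iff]
      simp only [Set.mem_range, not_exists, Finset.mem_singleton]
      constructor
      · rintro ⟨h1, h2⟩; exact ⟨h2, fun t => h1 t⟩
      · rintro ⟨h1, h2⟩; exact ⟨fun t => h2 t, h1⟩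
    rw [if_congr hiff rfl rfl]
    split_ifs <;> ring
  rw [Finset.sum_congr rfl (fun ι _ => h ι), ← Finset.mul_sum,
    inj_avoid_sum p (N+3) {i} (by simp)]

lemma aU3_num (N : ℕ) (i j k : Fin (N + 4)) (p : Fin (N + 4) → ℝ) :
    (∑ ι : Fin (N + 1) → Fin (N + 4), BMc N (Fin.cons i (Fin.cons j (Fin.cons k ι))) * ∏ t, p (ι t))
      = if i ≠ j ∧ i ≠ k ∧ j ≠ k then
          ((N+4).factorial : ℝ)⁻¹ * (((N+1).factorial : ℝ) * ∏ l ∈ ({i,j,k} : Finset (Fin (N+4)))ᶜ, p l)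
        else 0 := by
  unfold BMc
  have h : ∀ ι : Fin (N+1) → Fin (N+4),
      Function.Injective (Fin.cons i (Fin.cons j (Fin.cons k ι)) : Fin (N+4) → Fin (N+4))
      ↔ ((i ≠ j ∧ i ≠ k ∧ j ≠ k) ∧
          (Function.Injective ι ∧ ∀ t, ι t ∉ ({i,j,k} : Finset (Fin (N+4))))) := by
    intro ι
    rw [Fin.cons_injective_iff, Fin.cons_injective_iff, Fin.cons_injective_iff]
    simp only [Fin.range_cons, Set.mem_insert_iff, Set.mem_range, not_or, not_exists,
      Finset.mem_insert, Finset.mem_singleton]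
    constructor
    · rintro ⟨⟨hij, hik, hir⟩, ⟨hjk, hjr⟩, hkr, hinj⟩
      exact ⟨⟨hij, hik, hjk⟩, hinj, fun t => ⟨hir t, hjr t, hkr t⟩⟩
    · rintro ⟨⟨hij, hik, hjk⟩, hinj, hav⟩
      exact ⟨⟨hij, hik, fun t => (hav t).1⟩, ⟨hjk, fun t => (hav t).2.1⟩,
        fun t => (hav t).2.2, hinj⟩
  by_cases hd : i ≠ j ∧ i ≠ k ∧ j ≠ k
  · rw [if_pos hd]
    have h2 : ∀ ι : Fin (N+1) → Fin (N+4),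
        (if Function.Injective (Fin.cons i (Fin.cons j (Fin.cons k ι)) : Fin (N+4) → Fin (N+4))
          then (((N+4).factorial : ℝ))⁻¹ else 0) * ∏ t, p (ι t)
        = ((N+4).factorial : ℝ)⁻¹ *
          (if Function.Injective ι ∧ ∀ t, ι t ∉ ({i,j,k} : Finset (Fin (N+4))) then ∏ t, p (ι t) else 0) := by
      intro ι
      rw [if_congr (h ι) rfl rfl]
      by_cases hc : Function.Injective ι ∧ ∀ t, ι t ∉ ({i,j,k} : Finset (Fin (N+4)))
      · rw [if_pos ⟨hd, hc⟩, if_pos hc]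
      · rw [if_neg (fun hx => hc hx.2), if_neg hc]; ring
    rw [Finset.sum_congr rfl (fun ι _ => h2 ι), ← Finset.mul_sum,
      inj_avoid_sum p (N+1) {i,j,k} ?_]
    rw [Finset.card_insert_of_notMem (by simp [hd.1, hd.2.1]),
      Finset.card_insert_of_notMem (by simp [hd.2.2]), Finset.card_singleton]
  · rw [if_neg hd]
    apply Finset.sum_eq_zero
    intro ι _
    rw [if_neg (fun hx => hd ((h ι).mp hx).1)]
    ring
section
variable {N : ℕ} {p : Fin (N + 4) → ℝ}

lemma Pprod_pos (hp : ∀ i, 0 < p i) : 0 < ∏ i, p i :=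
  Finset.prod_pos fun i _ => hp i

lemma Kfun_pos (hp : ∀ i, 0 < p i) : 0 < Kfun N p := by
  rw [Kfun, Afun_eq]
  exact Real.rpow_pos_of_pos (Pprod_pos hp) _

lemma Kfun_pow (hp : ∀ i, 0 < p i) : Kfun N p ^ (N + 4) = ∏ i, p i := by
  rw [Kfun, Afun_eq, ← Real.rpow_natCast ((∏ i, p i) ^ ((1:ℝ)/(N+4))) (N+4),
    ← Real.rpow_mul (Pprod_pos hp).le]
  rw [show (1:ℝ)/(N+4) * ((N+4 : ℕ) : ℝ) = 1 by push_cast; field_simp]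
  exact Real.rpow_one _

lemma aU1_eq (hp : ∀ i, 0 < p i) (i : Fin (N + 4)) :
    aU1 N i p = Kfun N p / ((N + 4 : ℝ) * p i) := by
  have hK := Kfun_pos hp
  have hpi := (hp i).ne'
  have hfac4 : ((N+4).factorial : ℝ) ≠ 0 := by positivity
  have hfac3 : ((N+3).factorial : ℝ) ≠ 0 := by positivity
  have hn4 : ((N:ℝ)+4) ≠ 0 := by positivity
  have hKp : (Kfun N p ^ (N+3)) ≠ 0 := by positivity
  have hfac : ((N+4).factorial : ℝ) = (N+4 : ℝ) * ((N+3).factorial : ℝ) := by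
    rw [show N + 4 = (N+3) + 1 from rfl, Nat.factorial_succ]
    push_cast; ring
  have hprod : p i * ∏ j ∈ ({i} : Finset (Fin (N+4)))ᶜ, p j = ∏ j, p j := by
    rw [← Finset.prod_mul_prod_compl {i} p, Finset.prod_singleton]
  rw [← Kfun_pow hp, show Kfun N p ^ (N + 4) = Kfun N p * Kfun N p ^ (N + 3) by ring] at hprod
  have hQ : ∏ j ∈ ({i} : Finset (Fin (N+4)))ᶜ, p j
      = Kfun N p * Kfun N p ^ (N + 3) / p i := by
    rw [eq_div_iff hpi]; linarith [hprod]
  rw [aU1, aU1_num, hfac, hQ]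
  field_simp

lemma aU3_eq (hp : ∀ i, 0 < p i) (i j k : Fin (N + 4)) :
    aU3 N i j k p = if i ≠ j ∧ i ≠ k ∧ j ≠ k then
        Kfun N p ^ 3 / (((N + 4 : ℝ) * (N + 3) * (N + 2)) * (p i * p j * p k))
      else 0 := by
  have hK := Kfun_pos hp
  rw [aU3, aU3_num]
  split_ifs with hd
  · have hpi := (hp i).ne'
    have hpj := (hp j).ne'
    have hpk := (hp k).ne'
    have hfac4 : ((N+4).factorial : ℝ) ≠ 0 := by positivity
    have hfac1 : ((N+1).factorial : ℝ) ≠ 0 := by positivity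
    have hn4 : ((N:ℝ)+4) ≠ 0 := by positivity
    have hn3 : ((N:ℝ)+3) ≠ 0 := by positivity
    have hn2 : ((N:ℝ)+2) ≠ 0 := by positivity
    have hKp : (Kfun N p ^ (N+1)) ≠ 0 := by positivity
    have hfac : ((N+4).factorial : ℝ)
        = (N+4 : ℝ) * (N+3 : ℝ) * (N+2 : ℝ) * ((N+1).factorial : ℝ) := by
      rw [show N + 4 = ((N+1) + 1 + 1) + 1 from rfl, Nat.factorial_succ, Nat.factorial_succ,
        Nat.factorial_succ]
      push_cast; ring
    have hprod : (p i * p j * p k) * ∏ l ∈ ({i,j,k} : Finset (Fin (N+4)))ᶜ, p l = ∏ l, p l := by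
      rw [← Finset.prod_mul_prod_compl {i,j,k} p]
      congr 1
      rw [Finset.prod_insert (by simp [hd.1, hd.2.1]), Finset.prod_insert (by simp [hd.2.2]),
        Finset.prod_singleton, mul_assoc]
    rw [← Kfun_pow hp,
      show Kfun N p ^ (N + 4) = Kfun N p ^ 3 * Kfun N p ^ (N + 1) by ring] at hprod
    have hQ : ∏ l ∈ ({i,j,k} : Finset (Fin (N+4)))ᶜ, p l
        = Kfun N p ^ 3 * Kfun N p ^ (N + 1) / (p i * p j * p k) := by
      rw [eq_div_iff (by positivity)]; linarith [hprod]
    rw [hfac, hQ]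
    field_simp
  · simp

lemma part1 (hp : ∀ i, 0 < p i) (i : Fin (N + 4)) :
    ∑ r, (∑ s, aLowBM N p r s * aU3 N s i r p) = (N + 4 : ℝ) * aU1 N i p := by
  have hK := (Kfun_pos hp).ne'
  have hn4 : ((N:ℝ)+4) ≠ 0 := by positivity
  have hn3 : ((N:ℝ)+3) ≠ 0 := by positivity
  have hn2 : ((N:ℝ)+2) ≠ 0 := by positivity
  have hpi := (hp i).ne'
  have hinner : ∀ r : Fin (N+4), (∑ s, aLowBM N p r s * aU3 N s i r p)
      = if r = i then 0 else Kfun N p / ((N+3:ℝ) * p i) := by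
    intro r
    by_cases hr : r = i
    · rw [if_pos hr]
      apply Finset.sum_eq_zero
      intro s _
      rw [aU3_eq hp, if_neg (fun hc => hc.2.2 (hr ▸ rfl))]
      ring
    · rw [if_neg hr]
      have hterm : ∀ s : Fin (N+4), aLowBM N p r s * aU3 N s i r p
          = if s = i ∨ s = r then 0 else Kfun N p / ((N+3:ℝ) * (N+2:ℝ) * p i) := by
        intro s
        rw [aU3_eq hp]
        by_cases hs : s = i ∨ s = r
        · rw [if_pos hs, if_neg (fun hc => hs.elim (fun h => hc.1 h) (fun h => hc.2.1 h))]
          ring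
        · push_neg at hs
          rw [if_neg (not_or.mpr hs), if_pos ⟨hs.1, hs.2, fun h => hr h.symm⟩, aLowBM,
            if_neg (fun h => hs.2 h.symm)]
          have hps := (hp s).ne'
          have hpr := (hp r).ne'
          field_simp
      rw [Finset.sum_congr rfl (fun s _ => hterm s)]
      have hss : ∀ s ∈ (Finset.univ : Finset (Fin (N+4))),
          s ∉ (Finset.univ \ {i, r} : Finset (Fin (N+4))) →
          (if s = i ∨ s = r then (0:ℝ) else Kfun N p / ((N+3:ℝ) * (N+2:ℝ) * p i)) = 0 := by
        intro s _ hs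
        rw [if_pos (or_iff_not_imp_left.mpr (by simpa using hs))]
      rw [← Finset.sum_subset (Finset.subset_univ (Finset.univ \ {i, r})) hss]
      have hconst : ∀ s ∈ (Finset.univ \ {i, r} : Finset (Fin (N+4))),
          (if s = i ∨ s = r then (0:ℝ) else Kfun N p / ((N+3:ℝ) * (N+2:ℝ) * p i))
          = Kfun N p / ((N+3:ℝ) * (N+2:ℝ) * p i) := by
        intro s hs
        simp only [Finset.mem_sdiff, Finset.mem_univ, true_and, Finset.mem_insert,
          Finset.mem_singleton, not_or] at hs
        rw [if_neg (not_or.mpr hs)]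
      rw [Finset.sum_congr rfl hconst, Finset.sum_const]
      have hcard : (Finset.univ \ {i, r} : Finset (Fin (N+4))).card = N + 2 := by
        rw [Finset.card_sdiff_of_subset (Finset.subset_univ _), Finset.card_univ, Fintype.card_fin,
          Finset.card_insert_of_notMem (by simp [Ne.symm hr]), Finset.card_singleton]
        omega
      rw [hcard, nsmul_eq_mul]
      push_cast
      field_simp
  rw [Finset.sum_congr rfl (fun r _ => hinner r), aU1_eq hp]
  rw [← Finset.add_sum_erase _ _ (Finset.mem_univ i), if_pos rfl, zero_add]
  have hc2 : ∀ r ∈ Finset.univ.erase i,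
      (if r = i then (0:ℝ) else Kfun N p / ((N+3:ℝ) * p i)) = Kfun N p / ((N+3:ℝ) * p i) := by
    intro r hr
    rw [if_neg (Finset.ne_of_mem_erase hr)]
  rw [Finset.sum_congr rfl hc2, Finset.sum_const, Finset.card_erase_of_mem (Finset.mem_univ i),
    Finset.card_univ, Fintype.card_fin, nsmul_eq_mul]
  push_cast
  field_simp

end
section
variable {N : ℕ}

lemma hd0 {c x : ℝ} (a : ℝ) (hc : 0 < c) (hx : 0 < x) :
    HasDerivAt (fun t : ℝ => (c * t) ^ a) (a * (c * x) ^ a / x) x := by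
  have hcx : 0 < c * x := mul_pos hc hx
  have h1 : HasDerivAt (fun t : ℝ => c * t) c x := by
    simpa using (hasDerivAt_id x).const_mul c
  have h2 := (Real.hasDerivAt_rpow_const (x := c * x) (p := a) (Or.inl hcx.ne')).comp x h1
  refine h2.congr_deriv ?_
  rw [Real.rpow_sub_one hcx.ne']
  field_simp

lemma hd1 {c x : ℝ} (a : ℝ) (hc : 0 < c) (hx : 0 < x) :
    HasDerivAt (fun t : ℝ => (c * t) ^ a / t) ((a - 1) * (c * x) ^ a / x ^ 2) x := by
  have h := (hd0 a hc hx).div (hasDerivAt_id x) hx.ne'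
  refine h.congr_deriv ?_
  simp only [id]
  field_simp

lemma hd2 {c x : ℝ} (a : ℝ) (hc : 0 < c) (hx : 0 < x) :
    HasDerivAt (fun t : ℝ => (c * t) ^ a / t ^ 2) ((a - 2) * (c * x) ^ a / x ^ 3) x := by
  have h := (hd0 a hc hx).div (hasDerivAt_pow 2 x) (by positivity)
  refine h.congr_deriv ?_
  have hx2 : x ^ 2 ≠ 0 := by positivity
  field_simp
  ring

lemma update_pos {n : ℕ} {q : Fin n → ℝ} (hq : ∀ l, 0 < q l) {k : Fin n} {t : ℝ}
    (ht : 0 < t) : ∀ l, 0 < Function.update q k t l := by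
  intro l
  rw [Function.update_apply]
  split
  · exact ht
  · exact hq l

lemma pd_congr_pos {n : ℕ} (f g : (Fin n → ℝ) → ℝ) (k : Fin n) (q : Fin n → ℝ)
    (hq : ∀ l, 0 < q l) (h : ∀ r, (∀ l, 0 < r l) → f r = g r) : pd f k q = pd g k q := by
  unfold pd
  apply Filter.EventuallyEq.deriv_eq
  filter_upwards [eventually_gt_nhds (hq k)] with t ht
  exact h _ (update_pos hq ht)

lemma prod_update {n : ℕ} (q : Fin n → ℝ) (k : Fin n) (t : ℝ) :
    ∏ l, Function.update q k t l = (∏ l ∈ Finset.univ \ {k}, q l) * t := by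
  rw [Finset.prod_update_of_mem (Finset.mem_univ k), mul_comm]

lemma cprod_pos {n : ℕ} {q : Fin n → ℝ} (hq : ∀ l, 0 < q l) (k : Fin n) :
    0 < ∏ l ∈ Finset.univ \ {k}, q l :=
  Finset.prod_pos fun l _ => hq l

lemma cprod_mul {n : ℕ} (q : Fin n → ℝ) (k : Fin n) :
    (∏ l ∈ Finset.univ \ {k}, q l) * q k = ∏ l, q l := by
  have := prod_update q k (q k)
  rw [Function.update_eq_self] at this
  exact this.symm

lemma Kfun_sq {q : Fin (N + 4) → ℝ} (hq : ∀ l, 0 < q l) :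
    Kfun N q ^ 2 = (∏ l, q l) ^ ((2:ℝ) / (N + 4)) := by
  rw [Kfun, Afun_eq, ← Real.rpow_natCast ((∏ l, q l) ^ ((1:ℝ)/(N+4))) 2,
    ← Real.rpow_mul (Pprod_pos hq).le]
  rw [show (1:ℝ)/(N+4) * ((2:ℕ):ℝ) = 2/(N+4) by push_cast; ring]

lemma pd_Ksq {q : Fin (N + 4) → ℝ} (hq : ∀ l, 0 < q l) (j : Fin (N + 4)) :
    pd (fun r => Kfun N r ^ 2) j q
      = (2 / (N + 4 : ℝ)) * (∏ l, q l) ^ ((2:ℝ) / (N + 4)) / q j := by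
  rw [pd_congr_pos _ (fun r => (∏ l, r l) ^ ((2:ℝ) / (N + 4))) j q hq
    (fun r hr => Kfun_sq hr)]
  unfold pd
  set c := ∏ l ∈ Finset.univ \ {j}, q l with hc
  have hcpos : 0 < c := cprod_pos hq j
  have heq : (fun t => (∏ l, Function.update q j t l) ^ ((2:ℝ) / (N + 4)))
      = fun t => (c * t) ^ ((2:ℝ) / (N + 4)) := by
    funext t
    rw [prod_update]
  rw [heq, (hd0 ((2:ℝ)/(N+4)) hcpos (hq j)).deriv, hc, cprod_mul]

lemma gU_eq {q : Fin (N + 4) → ℝ} (hq : ∀ l, 0 < q l) (i j : Fin (N + 4)) :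
    gU N i j q = ((if i = j then 2 - (N + 4 : ℝ) else 2) / (N + 4 : ℝ) ^ 2)
      * (∏ l, q l) ^ ((2:ℝ) / (N + 4)) / (q i * q j) := by
  have hn4 : (0:ℝ) < (N:ℝ) + 4 := by positivity
  rw [gU, pd_congr_pos _
      (fun r => (2 / (N + 4 : ℝ)) * (∏ l, r l) ^ ((2:ℝ) / (N + 4)) / r j) i q hq
      (fun r hr => pd_Ksq hr j)]
  unfold pd
  set c := ∏ l ∈ Finset.univ \ {i}, q l with hc
  have hcpos : 0 < c := cprod_pos hq i
  have hcq : c * q i = ∏ l, q l := cprod_mul q i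
  by_cases hij : i = j
  · subst hij
    have heq : (fun t => (2 / (N + 4 : ℝ)) *
          (∏ l, Function.update q i t l) ^ ((2:ℝ) / (N + 4)) / Function.update q i t i)
        = fun t => (2 / (N + 4 : ℝ)) * ((c * t) ^ ((2:ℝ) / (N + 4)) / t) := by
      funext t
      rw [prod_update, Function.update_self]
      ring
    rw [heq, (HasDerivAt.const_mul _ (hd1 ((2:ℝ)/(N+4)) hcpos (hq i))).deriv, hcq]
    rw [if_pos rfl]
    have h1 := (hq i).ne'
    have hn4' : ((N:ℝ)+4) ≠ 0 := hn4.ne'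
    set X := (∏ l, q l) ^ ((2:ℝ)/(N+4)) with hX
    field_simp
    try ring
    try exact Or.inl trivial
  · have heq : (fun t => (2 / (N + 4 : ℝ)) *
          (∏ l, Function.update q i t l) ^ ((2:ℝ) / (N + 4)) / Function.update q i t j)
        = fun t => (2 / ((N + 4 : ℝ) * q j)) * (c * t) ^ ((2:ℝ) / (N + 4)) := by
      funext t
      rw [prod_update, Function.update_apply, if_neg (fun h => hij h.symm)]
      field_simp
      rw [← hc, mul_comm c t]
    rw [heq, (HasDerivAt.const_mul _ (hd0 ((2:ℝ)/(N+4)) hcpos (hq i))).deriv, hcq]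
    rw [if_neg hij]
    have h1 := (hq i).ne'
    have h2 := (hq j).ne'
    have hn4' : ((N:ℝ)+4) ≠ 0 := hn4.ne'
    set X := (∏ l, q l) ^ ((2:ℝ)/(N+4)) with hX
    field_simp
    try ring
    try exact Or.inl trivial

end
section
variable {N : ℕ}

lemma CU_eq {p : Fin (N + 4) → ℝ} (hp : ∀ l, 0 < p l) (s i r : Fin (N + 4)) :
    CU N s i r p = -(1/2 : ℝ) * ((if s = i then 2 - (N + 4 : ℝ) else 2) / (N + 4 : ℝ) ^ 2)
      * (2 / (N + 4 : ℝ) - (if r = s then 1 else 0) - (if r = i then 1 else 0))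
      * (∏ l, p l) ^ ((2:ℝ) / (N + 4)) / (p r * p s * p i) := by
  have hn4 : (0:ℝ) < (N:ℝ) + 4 := by positivity
  have hn4' : ((N:ℝ)+4) ≠ 0 := hn4.ne'
  set E := ((if s = i then 2 - (N + 4 : ℝ) else 2) / (N + 4 : ℝ) ^ 2) with hE
  rw [CU, pd_congr_pos _
      (fun q => E * ((∏ l, q l) ^ ((2:ℝ) / (N + 4)) / (q s * q i))) r p hp
      (fun q hq => by rw [gU_eq hq s i, ← hE]; ring)]
  unfold pd
  set c := ∏ l ∈ Finset.univ \ {r}, p l with hc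
  have hcpos : 0 < c := cprod_pos hp r
  have hcq : c * p r = ∏ l, p l := cprod_mul p r
  have hps := (hp s).ne'
  have hpi := (hp i).ne'
  have hpr := (hp r).ne'
  by_cases hrs : r = s
  · by_cases hri : r = i
    · -- r = s = i
      have heq : (fun t => E * ((∏ l, Function.update p r t l) ^ ((2:ℝ) / (N + 4))
            / (Function.update p r t s * Function.update p r t i)))
          = fun t => E * ((c * t) ^ ((2:ℝ) / (N + 4)) / t ^ 2) := by
        funext t
        rw [prod_update, Function.update_apply, Function.update_apply,
          if_pos hrs.symm, if_pos hri.symm]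
        ring
      rw [heq, (HasDerivAt.const_mul _ (hd2 ((2:ℝ)/(N+4)) hcpos (hp r))).deriv, hcq,
        if_pos hrs, if_pos hri, hE]
      subst hrs; subst hri
      set X := (∏ l, p l) ^ ((2:ℝ)/(N+4)) with hX
      field_simp
      try ring
      try exact Or.inl trivial
    · -- r = s ≠ i
      have heq : (fun t => E * ((∏ l, Function.update p r t l) ^ ((2:ℝ) / (N + 4))
            / (Function.update p r t s * Function.update p r t i)))
          = fun t => (E / p i) * ((c * t) ^ ((2:ℝ) / (N + 4)) / t) := by
        funext t
        rw [prod_update, Function.update_apply, Function.update_apply,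
          if_pos hrs.symm, if_neg (fun h => hri h.symm), ← hc]
        ring
      rw [heq, (HasDerivAt.const_mul _ (hd1 ((2:ℝ)/(N+4)) hcpos (hp r))).deriv, hcq,
        if_pos hrs, if_neg (hrs ▸ fun h => hri (hrs.symm ▸ h)), hE]
      subst hrs
      set X := (∏ l, p l) ^ ((2:ℝ)/(N+4)) with hX
      field_simp
      try ring
      try exact Or.inl trivial
  · by_cases hri : r = i
    · -- r = i ≠ s
      have heq : (fun t => E * ((∏ l, Function.update p r t l) ^ ((2:ℝ) / (N + 4))
            / (Function.update p r t s * Function.update p r t i)))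
          = fun t => (E / p s) * ((c * t) ^ ((2:ℝ) / (N + 4)) / t) := by
        funext t
        rw [prod_update, Function.update_apply, Function.update_apply,
          if_neg (fun h => hrs h.symm), if_pos hri.symm, ← hc]
        ring
      rw [heq, (HasDerivAt.const_mul _ (hd1 ((2:ℝ)/(N+4)) hcpos (hp r))).deriv, hcq,
        if_neg hrs, if_pos hri, hE]
      subst hri
      set X := (∏ l, p l) ^ ((2:ℝ)/(N+4)) with hX
      field_simp
      try ring
      try exact Or.inl trivial
    · -- r ∉ {s, i}
      have heq : (fun t => E * ((∏ l, Function.update p r t l) ^ ((2:ℝ) / (N + 4))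
            / (Function.update p r t s * Function.update p r t i)))
          = fun t => (E / (p s * p i)) * ((c * t) ^ ((2:ℝ) / (N + 4))) := by
        funext t
        rw [prod_update, Function.update_apply, Function.update_apply,
          if_neg (fun h => hrs h.symm), if_neg (fun h => hri h.symm), ← hc]
        ring
      rw [heq, (HasDerivAt.const_mul _ (hd0 ((2:ℝ)/(N+4)) hcpos (hp r))).deriv, hcq,
        if_neg hrs, if_neg hri, hE]
      set X := (∏ l, p l) ^ ((2:ℝ)/(N+4)) with hX
      field_simp
      try ring
      try exact Or.inl trivial

end
section
variable {N : ℕ} {p : Fin (N + 4) → ℝ}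

lemma gLow_eq (hp : ∀ l, 0 < p l) (r s : Fin (N + 4)) :
    gLowBM N p r s
      = (if r = s then -((N:ℝ)+2) else 2) * (p r / Kfun N p) * (p s / Kfun N p) := by
  have hK := (Kfun_pos hp).ne'
  have hn3 : ((N:ℝ)+3) ≠ 0 := by positivity
  rw [gLowBM, aLowBM]
  split_ifs with h
  · subst h
    field_simp
    ring
  · field_simp
    ring

lemma sum_ind_fst {n : ℕ} (r : Fin n) : ∑ s, (if r = s then (1:ℝ) else 0) = 1 := by
  rw [Finset.sum_ite_eq]
  simp

lemma sum_ind_snd {n : ℕ} (i : Fin n) : ∑ s, (if s = i then (1:ℝ) else 0) = 1 := by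
  rw [Finset.sum_ite_eq']
  simp

lemma sum_ind_both {n : ℕ} (r i : Fin n) :
    ∑ s, (if r = s then (1:ℝ) else 0) * (if s = i then (1:ℝ) else 0)
      = if r = i then (1:ℝ) else 0 := by
  have h : ∀ s : Fin n, (if r = s then (1:ℝ) else 0) * (if s = i then (1:ℝ) else 0)
      = if r = s then (if s = i then (1:ℝ) else 0) else 0 := by
    intro s
    split_ifs <;> ring
  rw [Finset.sum_congr rfl (fun s _ => h s), Finset.sum_ite_eq]
  simp

set_option maxHeartbeats 1000000 in
lemma part2 (hp : ∀ l, 0 < p l) (i : Fin (N + 4)) :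
    ∑ r, CL N p r i r = 0 := by
  have hKpos := Kfun_pos hp
  have hK := hKpos.ne'
  have hpi := (hp i).ne'
  have hK2 := Kfun_sq hp
  set n' : ℝ := (N:ℝ) + 4 with hn'
  have hn4 : n' ≠ 0 := by rw [hn']; positivity
  set C1 : ℝ := -2*(n'-2)*(2/n'-1)/n'^2 - 8/n'^3 with hC1
  set C2 : ℝ := 4*(2-n')/n'^3 - 8/n'^3 with hC2
  set C3 : ℝ := (2-n')*((2-n')/n'^2)*(2/n'-2) - 4*(2/n'-1)/n'^2 - C1 - C2 with hC3
  have hneg : -((N:ℝ)+2) = 2 - n' := by rw [hn']; ring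
  have hcast : ((N + 4 : ℕ) : ℝ) = n' := by rw [hn']; push_cast; ring
  clear_value n' C1 C2 C3
  have hterm : ∀ r s : Fin (N + 4), gLowBM N p r s * CU N s i r p
      = -(1/(2 * p i)) * ((if r = s then 2 - n' else 2)
          * ((if s = i then 2 - n' else 2) / n' ^ 2)
          * (2 / n' - (if r = s then 1 else 0) - (if r = i then 1 else 0))) := by
    intro r s
    rw [gLow_eq hp, CU_eq hp, ← hn', ← hK2, hneg]
    have hps := (hp s).ne'
    have hpr := (hp r).ne'
    set g1 := (if r = s then 2 - n' else 2) with hg1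
    set g2 := (if s = i then 2 - n' else 2) with hg2
    set g3 := (if r = s then (1:ℝ) else 0) with hg3
    set g4 := (if r = i then (1:ℝ) else 0) with hg4
    field_simp
  have hF : ∀ r s : Fin (N + 4), ((if r = s then 2 - n' else 2)
          * ((if s = i then 2 - n' else 2) / n' ^ 2)
          * (2 / n' - (if r = s then 1 else 0) - (if r = i then 1 else 0)))
      = 4*(2/n' - (if r = i then (1:ℝ) else 0))/n'^2
        + C1 * (if r = s then (1:ℝ) else 0)
        + C2 * (if s = i then (1:ℝ) else 0)
        + C3 * ((if r = s then (1:ℝ) else 0) * (if s = i then (1:ℝ) else 0)) := by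
    intro r s
    rw [hC3, hC2, hC1]
    split_ifs
    all_goals try ring
    all_goals exfalso
    all_goals subst_vars
    all_goals simp_all
  have hinner : ∀ r : Fin (N + 4), CL N p r i r
      = (-(1/(2 * p i)) * (n' * (8/n'^3) + C1 + C2))
        + (-(1/(2 * p i)) * (n' * (-4/n'^2) + C3)) * (if r = i then (1:ℝ) else 0) := by
    intro r
    rw [CL, Finset.sum_congr rfl (fun s _ => (hterm r s).trans (congrArg _ (hF r s))),
      ← Finset.mul_sum]
    rw [Finset.sum_add_distrib, Finset.sum_add_distrib, Finset.sum_add_distrib,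
      ← Finset.mul_sum, ← Finset.mul_sum, ← Finset.mul_sum,
      sum_ind_fst, sum_ind_snd, sum_ind_both]
    have hc0 : ∑ _s : Fin (N+4), 4*(2/n' - (if r = i then (1:ℝ) else 0))/n'^2
        = n' * (4*(2/n' - (if r = i then (1:ℝ) else 0))/n'^2) := by
      rw [Finset.sum_const, Finset.card_univ, Fintype.card_fin, nsmul_eq_mul, hcast]
    rw [hc0]
    split_ifs <;> ring
  rw [Finset.sum_congr rfl (fun r _ => hinner r), Finset.sum_add_distrib,
    Finset.sum_const, ← Finset.mul_sum, sum_ind_snd, Finset.card_univ, Fintype.card_fin,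
    nsmul_eq_mul]
  rw [hcast, hC3, hC2, hC1]
  field_simp
  ring

end

/-- for the Berwald–Moór metric of momenta (`n = N + 4`),
`∑_r a_r^{ir} = n a^i`, and hence the torsion covector `C^i = ∑_r C_r^{ir}` vanishes. -/
theorem stmt_17 (N : ℕ) (p : Fin (N + 4) → ℝ) (hp : ∀ i, 0 < p i) :
    (∀ i, ∑ r, (∑ s, aLowBM N p r s * aU3 N s i r p) = (N + 4 : ℝ) * aU1 N i p) ∧
    (∀ i, ∑ r, CL N p r i r = 0) := by
  exact ⟨fun i => part1 hp i, fun i => part2 hp i⟩
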